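/- arXiv:1611.01473 — 2 statements merged into one kernel-verified Lean document; each statement's English description precedes it below -/
import Mathlib

section
/- For the pure state ρ = |ψ⟩⟨ψ| with Schmidt decomposition |ψ⟩ = \sqrt{p}|a_1 b_1⟩ + \sqrt{1-p}|a_2 b_2⟩ on ℂ² ⊗ H_B, the local projective measurement in the Schmidt basis minimizes the entropy of the dephased state over all local rank-1 projective measurements on the first factor: for any orthonormal basis {|ã_1⟩, |ã_2⟩} of ℂ², the dephased state Π̃(ρ) satisfies S(Π̃(ρ)) ≥ h(p). -/
open scoped Kronecker ComplexOrder Matrix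

/-- Matrix logarithm of a Hermitian matrix via the spectral theorem
(junk value `0` on non-Hermitian matrices). -/
noncomputable def matLog {n : Type*} [Fintype n] [DecidableEq n]
    (A : Matrix n n ℂ) : Matrix n n ℂ :=
  if hA : A.IsHermitian then
    (hA.eigenvectorUnitary : Matrix n n ℂ) *
      Matrix.diagonal (fun i => (Real.log (hA.eigenvalues i) : ℂ)) *
      star (hA.eigenvectorUnitary : Matrix n n ℂ)
  else 0

/-- Von Neumann entropy `S(ρ) = -Tr(ρ log ρ)`. -/
noncomputable def vnEntropy {n : Type*} [Fintype n] [DecidableEq n]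
    (ρ : Matrix n n ℂ) : ℝ :=
  -((ρ * matLog ρ).trace.re)

/-- Quantum relative entropy `S(ρ‖σ) = Tr(ρ log ρ) - Tr(ρ log σ)`. -/
noncomputable def relEntropy {n : Type*} [Fintype n] [DecidableEq n]
    (ρ σ : Matrix n n ℂ) : ℝ :=
  ((ρ * matLog ρ).trace - (ρ * matLog σ).trace).re

/-- A density matrix: positive semidefinite with unit trace. -/
def IsDensity {n : Type*} [Fintype n] [DecidableEq n] (ρ : Matrix n n ℂ) : Prop :=
  ρ.PosSemidef ∧ ρ.trace = 1

/-- Pinching (dephasing) map by a family of projections. -/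
noncomputable def pinch {n ι : Type*} [Fintype n] [DecidableEq n] [Fintype ι]
    (P : ι → Matrix n n ℂ) (ρ : Matrix n n ℂ) : Matrix n n ℂ :=
  ∑ m, P m * ρ * P m

/-- A complete family of mutually orthogonal projections. -/
def IsProjFamily {n ι : Type*} [Fintype n] [DecidableEq n] [Fintype ι] [DecidableEq ι]
    (P : ι → Matrix n n ℂ) : Prop :=
  (∀ m, (P m).IsHermitian) ∧ (∀ m m', P m * P m' = if m = m' then P m else 0) ∧
    (∑ m, P m = 1)

/-- Outer product `|v⟩⟨v|`. -/
def outer {n : Type*} (v : n → ℂ) : Matrix n n ℂ :=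
  Matrix.vecMulVec v (star v)

/-- Binary Shannon entropy. -/
noncomputable def binEnt (p : ℝ) : ℝ :=
  -(p * Real.log p + (1 - p) * Real.log (1 - p))

/-- Shannon entropy of a finitely supported probability vector. -/
noncomputable def shannon {α : Type*} [Fintype α] (p : α → ℝ) : ℝ :=
  -∑ a, p a * Real.log (p a)

/-- Partial trace over the second tensor factor. -/
noncomputable def ptraceB {a b : Type*} [Fintype b]
    (ρ : Matrix (a × b) (a × b) ℂ) : Matrix a a ℂ :=
  Matrix.of fun i j => ∑ k, ρ (i, k) (j, k)

/-- Partial trace over the first tensor factor. -/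
noncomputable def ptraceA {a b : Type*} [Fintype a]
    (ρ : Matrix (a × b) (a × b) ℂ) : Matrix b b ℂ :=
  Matrix.of fun i j => ∑ k, ρ (k, i) (k, j)

lemma vnEntropy_eq_sum_eigen {n : Type*} [Fintype n] [DecidableEq n] {A : Matrix n n ℂ}
    (hA : A.IsHermitian) :
    vnEntropy A = -∑ i, hA.eigenvalues i * Real.log (hA.eigenvalues i) := by
  unfold vnEntropy matLog
  rw [dif_pos hA]
  set U := (hA.eigenvectorUnitary : Matrix n n ℂ) with hU
  have h1 : star U * U = 1 := Matrix.mem_unitaryGroup_iff'.mp hA.eigenvectorUnitary.2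
  have key : A * (U * Matrix.diagonal (fun i => (Real.log (hA.eigenvalues i) : ℂ)) * star U)
      = U * Matrix.diagonal (fun i => (hA.eigenvalues i : ℂ) * (Real.log (hA.eigenvalues i) : ℂ)) * star U := by
    rw [show A * (U * Matrix.diagonal (fun i => (Real.log (hA.eigenvalues i) : ℂ)) * star U) = (U * Matrix.diagonal (RCLike.ofReal ∘ hA.eigenvalues) * star U) * (U * Matrix.diagonal (fun i => (Real.log (hA.eigenvalues i) : ℂ)) * star U) from by have hs := hA.spectral_theorem; rw [Unitary.conjStarAlgAut_apply] at hs; exact congrArg (· * _) hs]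
    rw [show (U * Matrix.diagonal (RCLike.ofReal ∘ hA.eigenvalues) * star U) *
        (U * Matrix.diagonal (fun i => (Real.log (hA.eigenvalues i) : ℂ)) * star U)
      = U * (Matrix.diagonal (RCLike.ofReal ∘ hA.eigenvalues) * ((star U * U) *
          Matrix.diagonal (fun i => (Real.log (hA.eigenvalues i) : ℂ)))) * star U by
        simp only [mul_assoc]]
    rw [h1, one_mul, Matrix.diagonal_mul_diagonal]
    rfl
  rw [key, Matrix.trace_mul_cycle, h1, one_mul, Matrix.trace_diagonal]
  push_cast
  rw [Complex.re_sum]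
  simp

lemma det_sub_unitary_diag {n : Type*} [Fintype n] [DecidableEq n]
    (W : Matrix n n ℂ) (hW : W ∈ Matrix.unitaryGroup n ℂ) (e : n → ℂ) (x : ℂ) :
    Matrix.det (Matrix.diagonal (fun _ => x) - W * Matrix.diagonal e * star W)
      = ∏ i, (x - e i) := by
  have h1 : W * star W = 1 := Matrix.mem_unitaryGroup_iff.mp hW
  have : Matrix.diagonal (fun _ => x) - W * Matrix.diagonal e * star W
      = W * (Matrix.diagonal (fun _ => x) - Matrix.diagonal e) * star W := by
    rw [Matrix.mul_sub, Matrix.sub_mul]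
    congr 1
    have : Matrix.diagonal (fun _ : n => x) = x • (1 : Matrix n n ℂ) := by
      simp [Matrix.smul_one_eq_diagonal]
    rw [this, Matrix.mul_smul, mul_one, Matrix.smul_mul, h1]
  have h1' : star W * W = 1 := mul_eq_one_comm.mp h1
  rw [this, Matrix.det_mul, Matrix.det_mul, mul_comm, ← mul_assoc, ← Matrix.det_mul, h1']
  simp [Matrix.diagonal_sub, Matrix.det_diagonal]

lemma vnEntropy_unitary_diag {n : Type*} [Fintype n] [DecidableEq n]
    (V : Matrix n n ℂ) (hV : V ∈ Matrix.unitaryGroup n ℂ) (d : n → ℝ)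
    {A : Matrix n n ℂ}
    (hAeq : A = V * Matrix.diagonal (fun i => (d i : ℂ)) * star V) :
    vnEntropy A = -∑ i, d i * Real.log (d i) := by
  have hD' : (Matrix.diagonal fun i => ((d i : ℝ) : ℂ))ᴴ = Matrix.diagonal fun i => ((d i : ℝ) : ℂ) := by
    rw [Matrix.diagonal_conjTranspose]
    have hst : (star fun i => ((d i : ℝ) : ℂ)) = fun i => ((d i : ℝ) : ℂ) := by
      funext i
      exact Complex.conj_ofReal (d i)
    rw [hst]
  have hA : A.IsHermitian := by
    rw [hAeq]
    simp only [Matrix.IsHermitian, Matrix.star_eq_conjTranspose, Matrix.conjTranspose_mul,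
      Matrix.conjTranspose_conjTranspose, hD', mul_assoc]
  have hsp : RCLike.ofReal ∘ hA.eigenvalues = fun i => ((hA.eigenvalues i : ℝ) : ℂ) := rfl
  have hmul : ∀ x : ℂ, ∏ i, (x - ((hA.eigenvalues i : ℝ) : ℂ)) = ∏ i, (x - ((d i : ℝ) : ℂ)) := by
    intro x
    have hAs := hA.spectral_theorem
    rw [hsp] at hAs
    rw [Unitary.conjStarAlgAut_apply] at hAs
    rw [← det_sub_unitary_diag _ hA.eigenvectorUnitary.2 (fun i => ((hA.eigenvalues i : ℝ) : ℂ)) x,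
        ← det_sub_unitary_diag V hV (fun i => ((d i : ℝ) : ℂ)) x, ← hAs, ← hAeq]
  have e1 : ∀ (x : ℂ) (f : n → ℂ),
      Polynomial.eval x ((Finset.univ.val.map f).map (fun a => Polynomial.X - Polynomial.C a)).prod
        = ∏ i, (x - f i) := by
    intro x f
    rw [Polynomial.eval_multiset_prod, Multiset.map_map, Multiset.map_map, Finset.prod]
    congr 1
    apply Multiset.map_congr rfl
    intro i _
    simp
  have hpoly : (Finset.univ.val.map (fun i => ((hA.eigenvalues i : ℝ) : ℂ)))
      = Finset.univ.val.map (fun i => ((d i : ℝ) : ℂ)) := by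
    have hP : ((Finset.univ.val.map fun i => ((hA.eigenvalues i : ℝ) : ℂ)).map
          (fun a => Polynomial.X - Polynomial.C a)).prod
        = ((Finset.univ.val.map fun i => ((d i : ℝ) : ℂ)).map
          (fun a => Polynomial.X - Polynomial.C a)).prod := by
      apply Polynomial.funext
      intro x
      rw [e1, e1]
      exact hmul x
    have := congrArg Polynomial.roots hP
    rwa [Polynomial.roots_multiset_prod_X_sub_C, Polynomial.roots_multiset_prod_X_sub_C] at this
  have hms : Finset.univ.val.map hA.eigenvalues = Finset.univ.val.map d := by
    apply Multiset.map_injective (Complex.ofReal_injective)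
    rw [Multiset.map_map, Multiset.map_map]
    exact hpoly
  rw [vnEntropy_eq_sum_eigen hA]
  have e2 : ∀ (f : n → ℝ), ∑ i, f i * Real.log (f i)
      = ((Finset.univ.val.map f).map (fun t => t * Real.log t)).sum := by
    intro f
    rw [Finset.sum, Multiset.map_map]
    rfl
  rw [show (∑ i, hA.eigenvalues i * Real.log (hA.eigenvalues i)) = _ from e2 _, hms, ← e2]

lemma vnEntropy_sum_smul_outer {n : Type*} [Fintype n] [DecidableEq n] {k : ℕ}
    (v : Fin k → n → ℂ)
    (hv : ∀ i j, dotProduct (star (v i)) (v j) = if i = j then 1 else 0)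
    (c : Fin k → ℝ) :
    vnEntropy (∑ i, (c i : ℂ) • outer (v i)) = -∑ i, c i * Real.log (c i) := by
  classical
  let v' : Fin k → EuclideanSpace ℂ n := fun i => (WithLp.equiv 2 (n → ℂ)).symm (v i)
  have hv' : Orthonormal ℂ v' := by
    rw [orthonormal_iff_ite]
    intro i j
    have := hv i j
    rw [dotProduct_comm] at this
    exact this
  have hcard : k ≤ Fintype.card n := by
    have := hv'.linearIndependent.fintype_card_le_finrank
    simpa [finrank_euclideanSpace] using this
  obtain ⟨e⟩ : Nonempty (Fin k ↪ n) :=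
    Function.Embedding.nonempty_iff_card_le.2 (by simpa using hcard)
  let v'' : n → EuclideanSpace ℂ n := fun x => if h : ∃ i, e i = x then v' h.choose else 0
  have hv''e : ∀ i, v'' (e i) = v' i := by
    intro i
    have h : ∃ j, e j = e i := ⟨i, rfl⟩
    have hc : h.choose = i := e.injective h.choose_spec
    simp only [v'', dif_pos h, hc]
  have hres : Orthonormal ℂ ((Set.range e).restrict v'') := by
    rw [orthonormal_iff_ite]
    rintro ⟨x, i, rfl⟩ ⟨y, j, rfl⟩
    show inner ℂ (v'' (e i)) (v'' (e j)) = _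
    rw [hv''e, hv''e,
      orthonormal_iff_ite.mp hv' i j]
    simp [Subtype.ext_iff, e.injective.eq_iff]
  obtain ⟨bb, hbb⟩ := hres.exists_orthonormalBasis_extension_of_card_eq
    (by simp [finrank_euclideanSpace])
  let V : Matrix n n ℂ := Matrix.of fun x y => (WithLp.equiv 2 (n → ℂ)) (bb y) x
  have hVcol : ∀ i x, V x (e i) = v i x := by
    intro i x
    have h1 : bb (e i) = v'' (e i) := hbb (e i) ⟨i, rfl⟩
    simp only [V, Matrix.of_apply, h1, hv''e]
    rfl
  have hVu : V ∈ Matrix.unitaryGroup n ℂ := by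
    rw [Matrix.mem_unitaryGroup_iff']
    ext y z
    have hin := orthonormal_iff_ite.mp bb.orthonormal y z
    rw [EuclideanSpace.inner_eq_star_dotProduct] at hin
    have lhs : (star V * V) y z
        = dotProduct (star ((WithLp.equiv 2 (n → ℂ)) (bb y)))
          ((WithLp.equiv 2 (n → ℂ)) (bb z)) := by
      simp [Matrix.mul_apply, dotProduct, V, Matrix.star_eq_conjTranspose,
        Matrix.conjTranspose_apply, mul_comm]
    rw [lhs, Matrix.one_apply]
    exact (dotProduct_comm _ _).trans hin
  let dd : n → ℝ := fun y => if h : ∃ i, e i = y then c h.choose else 0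
  have hdd : ∀ i, dd (e i) = c i := by
    intro i
    have h : ∃ j, e j = e i := ⟨i, rfl⟩
    have hc : h.choose = i := e.injective h.choose_spec
    simp only [dd, dif_pos h, hc]
  have hdd0 : ∀ y, (¬ ∃ i, e i = y) → dd y = 0 := by
    intro y h
    simp only [dd, dif_neg h]
  have hsum_range : ∀ {M : Type} [AddCommMonoid M] (F : n → M),
      (∀ y, (¬ ∃ i, e i = y) → F y = 0) → ∑ y, F y = ∑ i, F (e i) := by
    intro M _ F hF
    rw [← Finset.sum_map Finset.univ e F]
    symm
    apply Finset.sum_subset (Finset.subset_univ _)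
    intro x _ hx
    apply hF
    intro ⟨i, hi⟩
    exact hx (Finset.mem_map.2 ⟨i, Finset.mem_univ i, hi⟩)
  have hA : (∑ i, (c i : ℂ) • outer (v i))
      = V * Matrix.diagonal (fun y => (dd y : ℂ)) * star V := by
    ext x z
    have lhs : (V * Matrix.diagonal (fun y => (dd y : ℂ)) * star V) x z
        = ∑ y, V x y * (dd y : ℂ) * (starRingEnd ℂ) (V z y) := by
      rw [Matrix.mul_apply]
      apply Finset.sum_congr rfl
      intro y _
      rw [Matrix.mul_diagonal, Matrix.star_eq_conjTranspose, Matrix.conjTranspose_apply]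
      rfl
    rw [lhs, hsum_range _ (by intro y hy; simp [hdd0 y hy])]
    simp only [hVcol, hdd, Matrix.sum_apply, Matrix.smul_apply, outer, Matrix.vecMulVec_apply,
      Pi.star_apply, smul_eq_mul]
    apply Finset.sum_congr rfl
    intro i _
    ring_nf
    rfl
  rw [vnEntropy_unitary_diag V hVu dd hA]
  congr 1
  rw [hsum_range (fun y => dd y * Real.log (dd y)) (by intro y hy; simp [hdd0 y hy])]
  apply Finset.sum_congr rfl
  intro i _
  rw [hdd]

lemma binEnt_eq (p : ℝ) : binEnt p = Real.binEntropy p := by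
  simp [binEnt, Real.binEntropy, Real.log_inv]
  ring

lemma binEnt_le_binEnt (p t : ℝ) (hp : p ∈ Set.Icc (0:ℝ) 1) (ht : t ∈ Set.Icc (0:ℝ) 1) :
    binEnt p ≤ binEnt (t * p + (1 - t) * (1 - p)) := by
  rw [binEnt_eq, binEnt_eq]
  have h : t • Real.binEntropy p + (1 - t) • Real.binEntropy (1 - p)
      ≤ Real.binEntropy (t • p + (1 - t) • (1 - p)) :=
    (Real.strictConcave_binEntropy.concaveOn).2 hp
      (Set.mem_Icc.2 ⟨by linarith [hp.1, hp.2], by linarith [hp.1, hp.2]⟩)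
      ht.1 (by linarith [ht.2]) (by ring)
  rw [Real.binEntropy_one_sub] at h
  simp only [smul_eq_mul] at h
  calc Real.binEntropy p = t * Real.binEntropy p + (1 - t) * Real.binEntropy p := by ring
    _ ≤ _ := h

lemma outer_conjTranspose {n : Type*} (v : n → ℂ) : (outer v)ᴴ = outer v := by
  ext i j
  simp [outer, Matrix.conjTranspose_apply, Matrix.vecMulVec_apply, mul_comm]

lemma conj_outer {n : Type*} [Fintype n] (A : Matrix n n ℂ) (v : n → ℂ) :
    A * outer v * Aᴴ = outer (A *ᵥ v) := by
  ext i j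
  simp only [outer, Matrix.mul_apply, Matrix.vecMulVec_apply, Matrix.conjTranspose_apply,
    Matrix.mulVec, dotProduct, Pi.star_apply, RCLike.star_def, map_sum, map_mul,
    Finset.sum_mul, Finset.mul_sum]
  apply Finset.sum_congr rfl
  intro y _
  apply Finset.sum_congr rfl
  intro x _
  ring

lemma dot_prod_factor {B : Type*} [Fintype B] (f g : Fin 2 → ℂ) (fw gw : B → ℂ) :
    dotProduct (star (fun x : Fin 2 × B => f x.1 * fw x.2))
      (fun x : Fin 2 × B => g x.1 * gw x.2)
      = dotProduct (star f) g * dotProduct (star fw) gw := by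
  simp only [dotProduct, Pi.star_apply, RCLike.star_def, map_mul,
    Fintype.sum_prod_type, Finset.sum_mul, Finset.mul_sum]
  rw [Finset.sum_comm]
  apply Finset.sum_congr rfl
  intro x _
  apply Finset.sum_congr rfl
  intro y _
  ring

lemma dot_conj_symm {n : Type*} [Fintype n] (v w : n → ℂ) :
    dotProduct (star v) w = (starRingEnd ℂ) (dotProduct (star w) v) := by
  simp only [dotProduct, Pi.star_apply, RCLike.star_def, map_sum, map_mul,
    Complex.conj_conj]
  apply Finset.sum_congr rfl
  intro x _
  ring

lemma ns_complete (x y a : Fin 2 → ℂ)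
    (hx : dotProduct (star x) x = 1) (hy : dotProduct (star y) y = 1)
    (hxy : dotProduct (star x) y = 0) (ha : dotProduct (star a) a = 1) :
    Complex.normSq (dotProduct (star x) a)
      + Complex.normSq (dotProduct (star y) a) = 1 := by
  classical
  let T : Matrix (Fin 2) (Fin 2) ℂ := Matrix.of fun i j => ![x, y] i j
  have hT1 : T * Tᴴ = 1 := by
    ext i j
    fin_cases i <;> fin_cases j <;>
      simp only [T, Matrix.mul_apply, Matrix.conjTranspose_apply, Matrix.of_apply,
        Fin.sum_univ_two, Matrix.one_apply, Matrix.cons_val_zero, Matrix.cons_val_one,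
        Matrix.head_cons] <;>
      [skip; skip; skip; skip]
    · calc x 0 * (starRingEnd ℂ) (x 0) + x 1 * (starRingEnd ℂ) (x 1)
          = (starRingEnd ℂ) ((starRingEnd ℂ) (x 0) * x 0 + (starRingEnd ℂ) (x 1) * x 1) := by
            simp [map_add, map_mul, mul_comm]
        _ = 1 := by
            rw [show (starRingEnd ℂ) (x 0) * x 0 + (starRingEnd ℂ) (x 1) * x 1 = 1 from by
              simpa [dotProduct, Fin.sum_univ_two] using hx]
            simp
    · calc x 0 * (starRingEnd ℂ) (y 0) + x 1 * (starRingEnd ℂ) (y 1)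
          = (starRingEnd ℂ) ((starRingEnd ℂ) (x 0) * y 0 + (starRingEnd ℂ) (x 1) * y 1) := by
            simp [map_add, map_mul, mul_comm]
        _ = 0 := by
            rw [show (starRingEnd ℂ) (x 0) * y 0 + (starRingEnd ℂ) (x 1) * y 1 = 0 from by
              simpa [dotProduct, Fin.sum_univ_two] using hxy]
            simp
    · calc y 0 * (starRingEnd ℂ) (x 0) + y 1 * (starRingEnd ℂ) (x 1)
          = (starRingEnd ℂ) ((starRingEnd ℂ) (y 0) * x 0 + (starRingEnd ℂ) (y 1) * x 1) := by
            simp [map_add, map_mul, mul_comm]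
        _ = 0 := by
            have h := dot_conj_symm y x
            rw [hxy] at h
            rw [show (starRingEnd ℂ) (y 0) * x 0 + (starRingEnd ℂ) (y 1) * x 1 = 0 from by
              simpa [dotProduct, Fin.sum_univ_two] using h]
            simp
    · calc y 0 * (starRingEnd ℂ) (y 0) + y 1 * (starRingEnd ℂ) (y 1)
          = (starRingEnd ℂ) ((starRingEnd ℂ) (y 0) * y 0 + (starRingEnd ℂ) (y 1) * y 1) := by
            simp [map_add, map_mul, mul_comm]
        _ = 1 := by
            rw [show (starRingEnd ℂ) (y 0) * y 0 + (starRingEnd ℂ) (y 1) * y 1 = 1 from by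
              simpa [dotProduct, Fin.sum_univ_two] using hy]
            simp
  have hTT : Tᴴ * T = 1 := mul_eq_one_comm.mp hT1
  have K : ∀ m n : Fin 2, (starRingEnd ℂ) (x m) * x n + (starRingEnd ℂ) (y m) * y n
      = if m = n then 1 else 0 := by
    intro m n
    have h2 := Matrix.ext_iff.mpr hTT m n
    simpa [T, Matrix.mul_apply, Matrix.conjTranspose_apply, Fin.sum_univ_two,
      Matrix.one_apply] using h2
  have K' : ∀ m n : Fin 2, x m * (starRingEnd ℂ) (x n) + y m * (starRingEnd ℂ) (y n)
      = if m = n then 1 else 0 := by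
    intro m n
    have h2 := congrArg (starRingEnd ℂ) (K m n)
    simpa [map_add, map_mul, Complex.conj_conj, apply_ite, mul_comm] using h2
  have K00 := K' 0 0
  have K01 := K' 0 1
  have K10 := K' 1 0
  have K11 := K' 1 1
  norm_num at K00 K01 K10 K11
  have ha2 : (starRingEnd ℂ) (a 0) * a 0 + (starRingEnd ℂ) (a 1) * a 1 = 1 := by
    simpa [dotProduct, Fin.sum_univ_two] using ha
  have key : (starRingEnd ℂ) (dotProduct (star x) a) * (dotProduct (star x) a)
      + (starRingEnd ℂ) (dotProduct (star y) a) * (dotProduct (star y) a)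
      = 1 := by
    simp only [dotProduct, Pi.star_apply, RCLike.star_def, Fin.sum_univ_two,
      map_add, map_mul, Complex.conj_conj]
    linear_combination ((starRingEnd ℂ) (a 0) * a 0) * K00
      + ((starRingEnd ℂ) (a 0) * a 1) * K01
      + ((starRingEnd ℂ) (a 1) * a 0) * K10
      + ((starRingEnd ℂ) (a 1) * a 1) * K11 + ha2
  rw [← Complex.normSq_eq_conj_mul_self, ← Complex.normSq_eq_conj_mul_self] at key
  exact_mod_cast key

lemma dot_comb {B : Type*} [Fintype B] (α β γ δ : ℂ) (b₁ b₂ : B → ℂ) :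
    dotProduct (star (fun y => α * b₁ y + β * b₂ y))
        (fun y => γ * b₁ y + δ * b₂ y)
      = (starRingEnd ℂ) α * γ * dotProduct (star b₁) b₁
        + (starRingEnd ℂ) α * δ * dotProduct (star b₁) b₂
        + (starRingEnd ℂ) β * γ * dotProduct (star b₂) b₁
        + (starRingEnd ℂ) β * δ * dotProduct (star b₂) b₂ := by
  simp only [dotProduct, Pi.star_apply, RCLike.star_def, map_add, map_mul,
    Finset.mul_sum]
  rw [← Finset.sum_add_distrib, ← Finset.sum_add_distrib, ← Finset.sum_add_distrib]
  apply Finset.sum_congr rfl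
  intro y _
  ring

lemma outer_smul_real {n : Type*} (r : ℝ) (u : n → ℂ) :
    outer (((r : ℂ)) • u) = ((r^2 : ℝ) : ℂ) • outer u := by
  ext i j
  simp only [outer, Matrix.vecMulVec_apply, Pi.smul_apply, Pi.star_apply, smul_eq_mul,
    Matrix.smul_apply, star_mul', RCLike.star_def, Complex.conj_ofReal]
  push_cast
  ring

lemma dot_smul_smul {n : Type*} [Fintype n] (c d : ℂ) (u v : n → ℂ) :
    dotProduct (star (c • u)) (d • v)
      = (starRingEnd ℂ) c * d * dotProduct (star u) v := by
  simp only [dotProduct, Pi.star_apply, Pi.smul_apply, smul_eq_mul, star_mul',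
    RCLike.star_def, Finset.mul_sum]
  apply Finset.sum_congr rfl
  intro y _
  ring

lemma pinch_outer {B : Type*} [Fintype B] [DecidableEq B] (ta : Fin 2 → ℂ)
    (ψ : Fin 2 × B → ℂ) :
    (outer ta ⊗ₖ (1 : Matrix B B ℂ)) * outer ψ * (outer ta ⊗ₖ (1 : Matrix B B ℂ))
      = outer (fun x : Fin 2 × B =>
          ta x.1 * ∑ m, (starRingEnd ℂ) (ta m) * ψ (m, x.2)) := by
  have hH : (outer ta ⊗ₖ (1 : Matrix B B ℂ))ᴴ = outer ta ⊗ₖ (1 : Matrix B B ℂ) := by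
    ext ⟨i, k⟩ ⟨j, l⟩
    simp only [Matrix.conjTranspose_apply, Matrix.kroneckerMap_apply, outer,
      Matrix.vecMulVec_apply, Pi.star_apply, RCLike.star_def, Matrix.one_apply,
      map_mul, Complex.conj_conj, mul_ite, mul_one, mul_zero]
    by_cases h : l = k
    · subst h
      simp [mul_comm]
    · rw [if_neg h, if_neg (fun hh => h hh.symm)]
      simp
  have hmv : (outer ta ⊗ₖ (1 : Matrix B B ℂ)) *ᵥ ψ
      = fun x : Fin 2 × B => ta x.1 * ∑ m, (starRingEnd ℂ) (ta m) * ψ (m, x.2) := by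
    funext ⟨i, k⟩
    simp only [Matrix.mulVec, dotProduct, Fintype.sum_prod_type,
      Matrix.kroneckerMap_apply, outer, Matrix.vecMulVec_apply, Pi.star_apply,
      RCLike.star_def, Matrix.one_apply, mul_ite, mul_one, mul_zero, ite_mul, zero_mul,
      Finset.sum_ite_eq, Finset.mem_univ, if_true, Finset.mul_sum]
    apply Finset.sum_congr rfl
    intro m _
    ring
  conv_lhs => rw [show (outer ta ⊗ₖ (1 : Matrix B B ℂ)) * outer ψ *
      (outer ta ⊗ₖ (1 : Matrix B B ℂ))
    = (outer ta ⊗ₖ (1 : Matrix B B ℂ)) * outer ψ *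
      (outer ta ⊗ₖ (1 : Matrix B B ℂ))ᴴ from by rw [hH]]
  rw [conj_outer, hmv]

/-- For a Schmidt-decomposed pure state on `ℂ² ⊗ H_B`, dephasing in any local
orthonormal basis `{|ta₁⟩,|ta₂⟩}` gives entropy at least `h(p)`: the Schmidt
basis measurement is optimal. -/
theorem schmidt_dephasing_optimal {B : Type*} [Fintype B] [DecidableEq B]
    (a₁ a₂ : Fin 2 → ℂ) (b₁ b₂ : B → ℂ)
    (ha₁ : star a₁ ⬝ᵥ a₁ = 1) (ha₂ : star a₂ ⬝ᵥ a₂ = 1) (ha₁₂ : star a₁ ⬝ᵥ a₂ = 0)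
    (hb₁ : star b₁ ⬝ᵥ b₁ = 1) (hb₂ : star b₂ ⬝ᵥ b₂ = 1) (hb₁₂ : star b₁ ⬝ᵥ b₂ = 0)
    (p : ℝ) (hp : p ∈ Set.Icc (0:ℝ) 1)
    (ψ : Fin 2 × B → ℂ)
    (hψ : ψ = fun x => (Real.sqrt p : ℂ) * a₁ x.1 * b₁ x.2 +
      (Real.sqrt (1 - p) : ℂ) * a₂ x.1 * b₂ x.2)
    (ρ : Matrix (Fin 2 × B) (Fin 2 × B) ℂ) (hρ : ρ = outer ψ)
    (ta₁ ta₂ : Fin 2 → ℂ)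
    (hta₁ : star ta₁ ⬝ᵥ ta₁ = 1) (hta₂ : star ta₂ ⬝ᵥ ta₂ = 1) (hta₁₂ : star ta₁ ⬝ᵥ ta₂ = 0)
    (Qt₁ Qt₂ : Matrix (Fin 2 × B) (Fin 2 × B) ℂ)
    (hQt₁ : Qt₁ = outer ta₁ ⊗ₖ (1 : Matrix B B ℂ))
    (hQt₂ : Qt₂ = outer ta₂ ⊗ₖ (1 : Matrix B B ℂ)) :
    binEnt p ≤ vnEntropy (Qt₁ * ρ * Qt₁ + Qt₂ * ρ * Qt₂) := by
  classical
  have hp0 := hp.1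
  have hp1 := hp.2
  set c11 := dotProduct (star ta₁) a₁ with hc11
  set c12 := dotProduct (star ta₁) a₂ with hc12
  set c21 := dotProduct (star ta₂) a₁ with hc21
  set c22 := dotProduct (star ta₂) a₂ with hc22
  set w₁ : B → ℂ := fun y => (Real.sqrt p : ℂ) * c11 * b₁ y
      + (Real.sqrt (1 - p) : ℂ) * c12 * b₂ y with hw₁def
  set w₂ : B → ℂ := fun y => (Real.sqrt p : ℂ) * c21 * b₁ y
      + (Real.sqrt (1 - p) : ℂ) * c22 * b₂ y with hw₂def
  set u₁ : Fin 2 × B → ℂ := fun x => ta₁ x.1 * w₁ x.2 with hu₁def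
  set u₂ : Fin 2 × B → ℂ := fun x => ta₂ x.1 * w₂ x.2 with hu₂def
  set q₁ : ℝ := p * Complex.normSq c11 + (1 - p) * Complex.normSq c12 with hq₁def
  set q₂ : ℝ := p * Complex.normSq c21 + (1 - p) * Complex.normSq c22 with hq₂def
  have hsp2 : (Real.sqrt p : ℂ) * (Real.sqrt p : ℂ) = (p : ℂ) := by
    rw [← Complex.ofReal_mul, Real.mul_self_sqrt hp0]
  have hsq2 : (Real.sqrt (1 - p) : ℂ) * (Real.sqrt (1 - p) : ℂ) = 1 - (p : ℂ) := by
    rw [← Complex.ofReal_mul, Real.mul_self_sqrt (by linarith)]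
    push_cast
    ring
  -- pinched blocks
  have H1 : Qt₁ * ρ * Qt₁ = outer u₁ := by
    rw [hQt₁, hρ, pinch_outer]
    apply congrArg outer
    funext x
    simp only [hu₁def, hw₁def, hψ, hc11, hc12, dotProduct, Pi.star_apply,
      RCLike.star_def, Fin.sum_univ_two]
    ring
  have H2 : Qt₂ * ρ * Qt₂ = outer u₂ := by
    rw [hQt₂, hρ, pinch_outer]
    apply congrArg outer
    funext x
    simp only [hu₂def, hw₂def, hψ, hc21, hc22, dotProduct, Pi.star_apply,
      RCLike.star_def, Fin.sum_univ_two]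
    ring
  have hb21 : star b₂ ⬝ᵥ b₁ = 0 := by
    rw [dot_conj_symm, hb₁₂, map_zero]
  have hta21 : star ta₂ ⬝ᵥ ta₁ = 0 := by
    rw [dot_conj_symm, hta₁₂, map_zero]
  -- norms of w
  have hww₁ : star w₁ ⬝ᵥ w₁ = (q₁ : ℂ) := by
    rw [hw₁def, dot_comb, hb₁, hb₂, hb₁₂, hb21, hq₁def]
    simp only [map_mul, Complex.conj_ofReal, mul_one, mul_zero, add_zero]
    rw [Complex.ofReal_add, Complex.ofReal_mul, Complex.ofReal_mul,
      Complex.normSq_eq_conj_mul_self, Complex.normSq_eq_conj_mul_self,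
      Complex.ofReal_sub, Complex.ofReal_one]
    linear_combination ((starRingEnd ℂ) c11 * c11) * hsp2 + ((starRingEnd ℂ) c12 * c12) * hsq2
  have hww₂ : star w₂ ⬝ᵥ w₂ = (q₂ : ℂ) := by
    rw [hw₂def, dot_comb, hb₁, hb₂, hb₁₂, hb21, hq₂def]
    simp only [map_mul, Complex.conj_ofReal, mul_one, mul_zero, add_zero]
    rw [Complex.ofReal_add, Complex.ofReal_mul, Complex.ofReal_mul,
      Complex.normSq_eq_conj_mul_self, Complex.normSq_eq_conj_mul_self,
      Complex.ofReal_sub, Complex.ofReal_one]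
    linear_combination ((starRingEnd ℂ) c21 * c21) * hsp2 + ((starRingEnd ℂ) c22 * c22) * hsq2
  -- dot products of u
  have huu11 : star u₁ ⬝ᵥ u₁ = (q₁ : ℂ) := by
    rw [hu₁def, dot_prod_factor, hta₁, hww₁, one_mul]
  have huu22 : star u₂ ⬝ᵥ u₂ = (q₂ : ℂ) := by
    rw [hu₂def, dot_prod_factor, hta₂, hww₂, one_mul]
  have huu12 : star u₁ ⬝ᵥ u₂ = 0 := by
    rw [hu₁def, hu₂def, dot_prod_factor, hta₁₂, zero_mul]
  have huu21 : star u₂ ⬝ᵥ u₁ = 0 := by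
    rw [hu₂def, hu₁def, dot_prod_factor, hta21, zero_mul]
  -- completeness
  have hcol1 := ns_complete ta₁ ta₂ a₁ hta₁ hta₂ hta₁₂ ha₁
  rw [← hc11, ← hc21] at hcol1
  have hcol2 := ns_complete ta₁ ta₂ a₂ hta₁ hta₂ hta₁₂ ha₂
  rw [← hc12, ← hc22] at hcol2
  have hrow1 := ns_complete a₁ a₂ ta₁ ha₁ ha₂ ha₁₂ hta₁
  rw [dot_conj_symm a₁ ta₁, dot_conj_symm a₂ ta₁, Complex.normSq_conj, Complex.normSq_conj,
    ← hc11, ← hc12] at hrow1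
  have hq₁nn : 0 ≤ q₁ := by
    rw [hq₁def]
    have := Complex.normSq_nonneg c11
    have := Complex.normSq_nonneg c12
    nlinarith
  have hq₂nn : 0 ≤ q₂ := by
    rw [hq₂def]
    have := Complex.normSq_nonneg c21
    have := Complex.normSq_nonneg c22
    nlinarith
  have hq12 : q₁ + q₂ = 1 := by
    rw [hq₁def, hq₂def]
    linear_combination p * hcol1 + (1 - p) * hcol2
  have hq₁form : q₁ = Complex.normSq c11 * p + (1 - Complex.normSq c11) * (1 - p) := by
    rw [hq₁def]
    linear_combination (1 - p) * hrow1
  -- entropy computation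
  have hent : vnEntropy (Qt₁ * ρ * Qt₁ + Qt₂ * ρ * Qt₂) = binEnt q₁ := by
    rw [H1, H2]
    by_cases h1 : q₁ = 0
    · have hu0 : u₁ = 0 := by
        apply dotProduct_star_self_eq_zero.mp
        rw [huu11, h1, Complex.ofReal_zero]
      have houter0 : outer u₁ = 0 := by
        rw [hu0]
        ext i j
        simp [outer, Matrix.vecMulVec_apply]
      have hq2 : q₂ = 1 := by linarith
      have hv : ∀ i j : Fin 1, dotProduct (star (![u₂] i)) (![u₂] j)
          = if i = j then 1 else 0 := by
        intro i j
        have hi : i = 0 := Subsingleton.elim _ _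
        have hj : j = 0 := Subsingleton.elim _ _
        subst hi
        subst hj
        rw [if_pos rfl]
        show star u₂ ⬝ᵥ u₂ = 1
        rw [huu22, hq2, Complex.ofReal_one]
      have hval := vnEntropy_sum_smul_outer (n := Fin 2 × B) ![u₂] hv ![(1 : ℝ)]
      rw [houter0, zero_add,
        show outer u₂ = ∑ i : Fin 1, ((![(1:ℝ)] i : ℝ) : ℂ) • outer (![u₂] i) by simp,
        hval, h1]
      simp [binEnt]
    by_cases h2 : q₂ = 0
    · have hu0 : u₂ = 0 := by
        apply dotProduct_star_self_eq_zero.mp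
        rw [huu22, h2, Complex.ofReal_zero]
      have houter0 : outer u₂ = 0 := by
        rw [hu0]
        ext i j
        simp [outer, Matrix.vecMulVec_apply]
      have hq1 : q₁ = 1 := by linarith
      have hv : ∀ i j : Fin 1, dotProduct (star (![u₁] i)) (![u₁] j)
          = if i = j then 1 else 0 := by
        intro i j
        have hi : i = 0 := Subsingleton.elim _ _
        have hj : j = 0 := Subsingleton.elim _ _
        subst hi
        subst hj
        rw [if_pos rfl]
        show star u₁ ⬝ᵥ u₁ = 1
        rw [huu11, hq1, Complex.ofReal_one]
      have hval := vnEntropy_sum_smul_outer (n := Fin 2 × B) ![u₁] hv ![(1 : ℝ)]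
      rw [houter0, add_zero,
        show outer u₁ = ∑ i : Fin 1, ((![(1:ℝ)] i : ℝ) : ℂ) • outer (![u₁] i) by simp,
        hval, hq1]
      simp [binEnt]
    · have hq₁pos : 0 < q₁ := lt_of_le_of_ne hq₁nn (Ne.symm h1)
      have hq₂pos : 0 < q₂ := lt_of_le_of_ne hq₂nn (Ne.symm h2)
      set r₁ : ℝ := (Real.sqrt q₁)⁻¹ with hr₁def
      set r₂ : ℝ := (Real.sqrt q₂)⁻¹ with hr₂def
      have hr₁sq : r₁ * r₁ = q₁⁻¹ := by
        rw [hr₁def, ← mul_inv, Real.mul_self_sqrt hq₁nn]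
      have hr₂sq : r₂ * r₂ = q₂⁻¹ := by
        rw [hr₂def, ← mul_inv, Real.mul_self_sqrt hq₂nn]
      set v : Fin 2 → (Fin 2 × B → ℂ) := ![((r₁ : ℝ) : ℂ) • u₁, ((r₂ : ℝ) : ℂ) • u₂]
        with hvdef
      have hv : ∀ i j : Fin 2, dotProduct (star (v i)) (v j)
          = if i = j then 1 else 0 := by
        intro i j
        fin_cases i <;> fin_cases j <;>
          simp only [hvdef, Fin.zero_eta, Fin.mk_one, Matrix.cons_val_zero, Matrix.cons_val_one,
            Matrix.head_cons, dot_smul_smul, Complex.conj_ofReal]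
        · rw [huu11, ← Complex.ofReal_mul, ← Complex.ofReal_mul, hr₁sq,
            inv_mul_cancel₀ (ne_of_gt hq₁pos)]
          simp
        · rw [huu12, mul_zero]
          simp
        · rw [huu21, mul_zero]
          simp
        · rw [huu22, ← Complex.ofReal_mul, ← Complex.ofReal_mul, hr₂sq,
            inv_mul_cancel₀ (ne_of_gt hq₂pos)]
          simp
      have hcast₁ : (q₁ : ℂ) * ((r₁ ^ 2 : ℝ) : ℂ) = 1 := by
        rw [← Complex.ofReal_mul, sq, hr₁sq, mul_inv_cancel₀ (ne_of_gt hq₁pos),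
          Complex.ofReal_one]
      have hcast₂ : (q₂ : ℂ) * ((r₂ ^ 2 : ℝ) : ℂ) = 1 := by
        rw [← Complex.ofReal_mul, sq, hr₂sq, mul_inv_cancel₀ (ne_of_gt hq₂pos),
          Complex.ofReal_one]
      have hsum : outer u₁ + outer u₂ = ∑ i, ((![q₁, q₂] i : ℝ) : ℂ) • outer (v i) := by
        rw [Fin.sum_univ_two]
        simp only [hvdef, Matrix.cons_val_zero, Matrix.cons_val_one, Matrix.head_cons]
        rw [outer_smul_real, outer_smul_real, smul_smul, smul_smul, hcast₁, hcast₂,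
          one_smul, one_smul]
      rw [hsum, vnEntropy_sum_smul_outer v hv ![q₁, q₂], Fin.sum_univ_two]
      simp only [Matrix.cons_val_zero, Matrix.cons_val_one, Matrix.head_cons]
      have hq2eq : q₂ = 1 - q₁ := by linarith
      rw [hq2eq]
      unfold binEnt
      rfl
  rw [hent]
  have htIcc : Complex.normSq c11 ∈ Set.Icc (0:ℝ) 1 :=
    ⟨Complex.normSq_nonneg _, by nlinarith [Complex.normSq_nonneg c12]⟩
  calc binEnt p ≤ binEnt (Complex.normSq c11 * p + (1 - Complex.normSq c11) * (1 - p)) :=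
        binEnt_le_binEnt p _ hp htIcc
    _ = binEnt q₁ := by rw [← hq₁form]
end

section
/- Lemma 1 specialized: if a density matrix ρ on H_A ⊗ H_B ⊗ H_X has the form ρ = ρ_l^{AB} ⊗ |θ_l⟩⟨θ_l|_X (support on a single symmetry eigenvalue), then for any dephasing Π with projectors Π_b^B ⊗ |x⟩⟨x|_X there is a symmetric dephasing P with projectors P_b^B ⊗ |θ_x⟩⟨θ_x|_X (taking P_b = Π_b) such that S(ρ || P(ρ)) ≤ S(ρ || Π(ρ)). Hence the minimum of the local disturbance over all such dephasings is attained on symmetric ones. -/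
open scoped Kronecker ComplexOrder Matrix

set_option linter.unusedSectionVars false

section Helpers

open Matrix Polynomial
open scoped Kronecker

variable {n m : Type*} [Fintype n] [DecidableEq n] [Fintype m] [DecidableEq m]

lemma pow_unitary_diag (V : Matrix n m ℂ) (hV1 : Vᴴ * V = 1) (hV2 : V * Vᴴ = 1)
    (g : m → ℂ) (k : ℕ) :
    (V * diagonal g * Vᴴ) ^ k = V * diagonal (fun i => g i ^ k) * Vᴴ := by
  induction k with
  | zero =>
      rw [pow_zero, show (fun i : m => g i ^ 0) = fun _ => (1:ℂ) from funext fun i => pow_zero _,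
        Matrix.diagonal_one, Matrix.mul_one, hV2]
  | succ k ih =>
      rw [pow_succ, ih]
      calc V * diagonal (fun i => g i ^ k) * Vᴴ * (V * diagonal g * Vᴴ)
          = V * diagonal (fun i => g i ^ k) * (Vᴴ * V) * diagonal g * Vᴴ := by
            simp only [Matrix.mul_assoc]
        _ = V * (diagonal (fun i => g i ^ k) * diagonal g) * Vᴴ := by
            rw [hV1]; simp only [Matrix.mul_one, Matrix.mul_assoc]
        _ = V * diagonal (fun i => g i ^ (k + 1)) * Vᴴ := by
            rw [diagonal_mul_diagonal]
            simp only [← pow_succ]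

lemma aeval_unitary_diag (V : Matrix n m ℂ) (hV1 : Vᴴ * V = 1) (hV2 : V * Vᴴ = 1)
    (g : m → ℂ) (q : ℂ[X]) :
    aeval (V * diagonal g * Vᴴ) q = V * diagonal (fun i => q.eval (g i)) * Vᴴ := by
  induction q using Polynomial.induction_on' with
  | add p q hp hq =>
      rw [map_add, hp, hq]
      simp only [eval_add]
      rw [← diagonal_add, Matrix.mul_add, Matrix.add_mul]
  | monomial k a =>
      rw [aeval_monomial, pow_unitary_diag V hV1 hV2]
      have : (algebraMap ℂ (Matrix n n ℂ)) a = a • (1 : Matrix n n ℂ) := by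
        simp [Algebra.algebraMap_eq_smul_one]
      rw [this, smul_mul_assoc, one_mul]
      simp only [eval_monomial]
      rw [← Matrix.smul_mul, ← Matrix.mul_smul, ← diagonal_smul]
      rfl

lemma matLog_decomp (V : Matrix n m ℂ) (hV1 : Vᴴ * V = 1) (hV2 : V * Vᴴ = 1) (d : m → ℝ) :
    matLog (V * diagonal (fun i => (d i : ℂ)) * Vᴴ) =
      V * diagonal (fun i => (Real.log (d i) : ℂ)) * Vᴴ := by
  have hA : (V * diagonal (fun i => (d i : ℂ)) * Vᴴ).IsHermitian := by
    have hst : star (fun i => ((d i : ℝ) : ℂ)) = fun i => ((d i : ℝ) : ℂ) :=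
      funext fun i => Complex.conj_ofReal (d i)
    have : (diagonal (fun i => (d i : ℂ)))ᴴ = diagonal (fun i => (d i : ℂ)) := by
      rw [diagonal_conjTranspose, hst]
    unfold Matrix.IsHermitian
    rw [conjTranspose_mul, conjTranspose_mul, conjTranspose_conjTranspose, this,
      Matrix.mul_assoc]
  rw [matLog, dif_pos hA]
  set U := (hA.eigenvectorUnitary : Matrix n n ℂ) with hUdef
  have hU1 : Uᴴ * U = 1 := by
    rw [← Matrix.star_eq_conjTranspose]
    exact Matrix.mem_unitaryGroup_iff'.mp hA.eigenvectorUnitary.2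
  have hU2 : U * Uᴴ = 1 := by
    rw [← Matrix.star_eq_conjTranspose]
    exact Matrix.mem_unitaryGroup_iff.mp hA.eigenvectorUnitary.2
  set ev := hA.eigenvalues with hevdef
  set S : Finset ℝ := Finset.univ.image ev ∪ Finset.univ.image d with hSdef
  set q : Polynomial ℂ :=
    (Lagrange.interpolate S id Real.log).map (algebraMap ℝ ℂ) with hqdef
  have key : ∀ x ∈ S, q.eval (x : ℂ) = (Real.log x : ℂ) := by
    intro x hx
    rw [hqdef, Polynomial.eval_map,
      show ((x:ℝ):ℂ) = algebraMap ℝ ℂ x from rfl, Polynomial.eval₂_at_apply]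
    have h2 := Lagrange.eval_interpolate_at_node Real.log (Set.injOn_id (S : Set ℝ)) hx
    simp only [id] at h2
    rw [h2]
    rfl
  have hspec : V * diagonal (fun i => (d i : ℂ)) * Vᴴ
      = U * diagonal (fun i => (ev i : ℂ)) * Uᴴ := by
    have := hA.spectral_theorem
    rw [Unitary.conjStarAlgAut_apply, Matrix.star_eq_conjTranspose] at this
    exact this
  calc U * diagonal (fun i => (Real.log (ev i) : ℂ)) * star U
      = U * diagonal (fun i => q.eval ((ev i : ℝ) : ℂ)) * Uᴴ := by
        rw [Matrix.star_eq_conjTranspose]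
        have : (fun i => (Real.log (ev i) : ℂ)) = fun i => q.eval ((ev i : ℝ) : ℂ) :=
          funext fun i => (key (ev i) (Finset.mem_union_left _
            (Finset.mem_image_of_mem ev (Finset.mem_univ i)))).symm
        rw [this]
    _ = Polynomial.aeval (U * diagonal (fun i => (ev i : ℂ)) * Uᴴ) q :=
        (aeval_unitary_diag U hU1 hU2 _ q).symm
    _ = Polynomial.aeval (V * diagonal (fun i => (d i : ℂ)) * Vᴴ) q := by rw [← hspec]
    _ = V * diagonal (fun i => q.eval ((d i : ℝ) : ℂ)) * Vᴴ :=
        aeval_unitary_diag V hV1 hV2 _ q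
    _ = V * diagonal (fun i => (Real.log (d i) : ℂ)) * Vᴴ := by
        have : (fun i => q.eval ((d i : ℝ) : ℂ)) = fun i => (Real.log (d i) : ℂ) :=
          funext fun i => key (d i) (Finset.mem_union_right _
            (Finset.mem_image_of_mem d (Finset.mem_univ i)))
        rw [this]

lemma kron_conjTranspose {p q : Type*} (M : Matrix n m ℂ) (N : Matrix p q ℂ) :
    (M ⊗ₖ N)ᴴ = Mᴴ ⊗ₖ Nᴴ := by
  ext ⟨i, j⟩ ⟨k, r⟩
  simp [conjTranspose_apply, Matrix.kroneckerMap_apply, star_mul']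

lemma sum_kronecker_left {κ p q : Type*} [Fintype κ] (f : κ → Matrix n m ℂ)
    (N : Matrix p q ℂ) : (∑ i, f i) ⊗ₖ N = ∑ i, f i ⊗ₖ N := by
  ext ⟨a, b⟩ ⟨c, d⟩
  simp [Matrix.kroneckerMap_apply, Matrix.sum_apply, Finset.sum_mul]

lemma vecMulVec_mul_vecMulVec {a b c : Type*} [Fintype b]
    (u : a → ℂ) (v : b → ℂ) (w : b → ℂ) (z : c → ℂ) :
    vecMulVec u v * vecMulVec w z = (v ⬝ᵥ w) • vecMulVec u z := by
  ext i j
  simp only [Matrix.mul_apply, vecMulVec_apply, Matrix.smul_apply, dotProduct,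
    Finset.sum_mul, smul_eq_mul]
  refine Finset.sum_congr rfl fun k _ => by ring

lemma star_dotProduct_comm {a : Type*} [Fintype a] (v w : a → ℂ) :
    star v ⬝ᵥ w = star (star w ⬝ᵥ v) := by
  simp only [dotProduct, star_sum, Pi.star_apply, star_mul', star_star]
  refine Finset.sum_congr rfl fun k _ => by ring

lemma trace_quad {k : Type*} [Fintype k] [DecidableEq k]
    (ρ : Matrix n n ℂ) (V : Matrix n k ℂ) (g : k → ℂ) :
    (ρ * (V * diagonal g * Vᴴ)).trace = ∑ i, g i * (Vᴴ * ρ * V) i i := by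
  have h1 : ρ * (V * diagonal g * Vᴴ) = (ρ * (V * diagonal g)) * Vᴴ := by
    simp only [Matrix.mul_assoc]
  rw [h1, Matrix.trace_mul_comm]
  have h2 : Vᴴ * (ρ * (V * diagonal g)) = (Vᴴ * ρ * V) * diagonal g := by
    simp only [Matrix.mul_assoc]
  rw [h2]
  simp only [Matrix.trace, Matrix.diag_apply, Matrix.mul_diagonal]
  exact Finset.sum_congr rfl fun i _ => mul_comm _ _

end Helpers

section Helpers2

open Matrix
open scoped Kronecker

lemma kronecker_sum_right {n m p q κ : Type*} [Fintype κ] (M : Matrix n m ℂ)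
    (f : κ → Matrix p q ℂ) : M ⊗ₖ (∑ i, f i) = ∑ i, M ⊗ₖ f i := by
  ext ⟨a, b⟩ ⟨c, d⟩
  simp [Matrix.kroneckerMap_apply, Matrix.sum_apply, Finset.mul_sum]

lemma pinch_kron {A B X κ β : Type*}
    [Fintype A] [DecidableEq A] [Fintype B] [DecidableEq B]
    [Fintype X] [DecidableEq X] [Fintype κ] [DecidableEq κ]
    [Fintype β] [DecidableEq β]
    (Qb : β → Matrix B B ℂ) (F : κ → Matrix X X ℂ)
    (ρl : Matrix (A × B) (A × B) ℂ) (G : Matrix X X ℂ) :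
    pinch (fun bx : β × κ => ((1 : Matrix A A ℂ) ⊗ₖ Qb bx.1) ⊗ₖ F bx.2) (ρl ⊗ₖ G)
      = (∑ b, (((1 : Matrix A A ℂ) ⊗ₖ Qb b) * ρl * ((1 : Matrix A A ℂ) ⊗ₖ Qb b)))
          ⊗ₖ (∑ x, F x * G * F x) := by
  unfold pinch
  rw [Fintype.sum_prod_type, sum_kronecker_left]
  refine Finset.sum_congr rfl fun b _ => ?_
  rw [kronecker_sum_right]
  refine Finset.sum_congr rfl fun x _ => ?_
  rw [Matrix.mul_kronecker_mul, Matrix.mul_kronecker_mul]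

end Helpers2

/-- Lemma 1 specialized: for `ρ = ρₗ^{AB} ⊗ |θₗ⟩⟨θₗ|` (support on a single
symmetry eigenvalue) and any dephasing with projectors `Π_b ⊗ |x⟩⟨x|`, the
symmetric dephasing with the same `Π_b` and the `θ`-basis creates a smaller
disturbance. -/
theorem symmetric_dephasing_optimal {A B X ι β : Type*}
    [Fintype A] [DecidableEq A] [Fintype B] [DecidableEq B]
    [Fintype X] [DecidableEq X] [Fintype ι] [DecidableEq ι]
    [Fintype β] [DecidableEq β]
    (θ : ι → (X → ℂ)) (hθ : ∀ j k, star (θ j) ⬝ᵥ θ k = if j = k then 1 else 0)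
    (hθc : ∑ j, outer (θ j) = 1)
    (xb : X → (X → ℂ)) (hxb : ∀ j k, star (xb j) ⬝ᵥ xb k = if j = k then 1 else 0)
    (hxbc : ∑ j, outer (xb j) = 1)
    (Qb : β → Matrix B B ℂ) (hQb : IsProjFamily Qb)
    (l : ι) (ρl : Matrix (A × B) (A × B) ℂ) (hρl : IsDensity ρl)
    (ρ : Matrix ((A × B) × X) ((A × B) × X) ℂ)
    (hρ : ρ = ρl ⊗ₖ outer (θ l)) :
    relEntropy ρ
        (pinch (fun bx : β × ι =>
          ((1 : Matrix A A ℂ) ⊗ₖ Qb bx.1) ⊗ₖ outer (θ bx.2)) ρ) ≤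
      relEntropy ρ
        (pinch (fun bx : β × X =>
          ((1 : Matrix A A ℂ) ⊗ₖ Qb bx.1) ⊗ₖ outer (xb bx.2)) ρ) := by
  classical
  subst hρ
  obtain ⟨hQbH, hQbO, hQbC⟩ := hQb
  set Pi' : β → Matrix (A × B) (A × B) ℂ := fun b => (1 : Matrix A A ℂ) ⊗ₖ Qb b with hPidef
  set σ : Matrix (A × B) (A × B) ℂ := ∑ b, Pi' b * ρl * Pi' b with hσdef
  -- triple outer product
  have houter : ∀ (u v : X → ℂ), outer u * outer v * outer u
      = ((star u ⬝ᵥ v) * (star v ⬝ᵥ u)) • outer u := by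
    intro u v
    rw [outer, outer, vecMulVec_mul_vecMulVec, Matrix.smul_mul,
      vecMulVec_mul_vecMulVec, smul_smul]
  -- the symmetric pinch
  have hsym : pinch (fun bx : β × ι =>
      ((1 : Matrix A A ℂ) ⊗ₖ Qb bx.1) ⊗ₖ outer (θ bx.2)) (ρl ⊗ₖ outer (θ l))
      = σ ⊗ₖ outer (θ l) := by
    rw [pinch_kron Qb (fun j => outer (θ j)) ρl (outer (θ l))]
    have hσeq : ∑ b, (((1 : Matrix A A ℂ) ⊗ₖ Qb b) * ρl * ((1 : Matrix A A ℂ) ⊗ₖ Qb b)) = σ := rfl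
    rw [hσeq]
    have h1 : ∀ x : ι, outer (θ x) * outer (θ l) * outer (θ x)
        = if x = l then outer (θ l) else 0 := by
      intro x
      rw [houter, hθ x l, hθ l x]
      rcases eq_or_ne x l with h | h
      · subst h; simp
      · simp [h, Ne.symm h]
    have h2 : ∑ x : ι, outer (θ x) * outer (θ l) * outer (θ x) = outer (θ l) := by
      rw [show (fun x : ι => outer (θ x) * outer (θ l) * outer (θ x))
          = fun x => if x = l then outer (θ l) else 0 from funext h1]
      simp
    exact congrArg (σ ⊗ₖ ·) h2
  -- probabilities
  set c : X → ℂ := fun x => star (xb x) ⬝ᵥ θ l with hcdef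
  set p : X → ℝ := fun x => Complex.normSq (c x) with hpdef
  set D : Matrix X X ℂ := ∑ x, (p x : ℂ) • outer (xb x) with hDdef
  have hpi : pinch (fun bx : β × X =>
      ((1 : Matrix A A ℂ) ⊗ₖ Qb bx.1) ⊗ₖ outer (xb bx.2)) (ρl ⊗ₖ outer (θ l))
      = σ ⊗ₖ D := by
    rw [pinch_kron Qb (fun x => outer (xb x)) ρl (outer (θ l))]
    have hσeq : ∑ b, (((1 : Matrix A A ℂ) ⊗ₖ Qb b) * ρl * ((1 : Matrix A A ℂ) ⊗ₖ Qb b)) = σ := rfl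
    rw [hσeq]
    refine congrArg (σ ⊗ₖ ·) (Finset.sum_congr rfl fun x _ => ?_)
    rw [houter]
    congr 1
    rw [show star (θ l) ⬝ᵥ xb x = star (star (xb x) ⬝ᵥ θ l) from star_dotProduct_comm _ _]
    have hx1 : star (xb x) ⬝ᵥ θ l = c x := rfl
    rw [hx1]
    simpa using Complex.mul_conj (c x)
  -- basis matrices
  set T : Matrix X ι ℂ := Matrix.of fun x j => θ j x with hTdef
  set W : Matrix X X ℂ := Matrix.of fun x j => xb j x with hWdef
  have hT1 : Tᴴ * T = 1 := by
    ext j k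
    have h := hθ j k
    simp only [dotProduct, Pi.star_apply] at h
    simp only [Matrix.mul_apply, Matrix.conjTranspose_apply, hTdef, Matrix.of_apply, Matrix.one_apply]
    simpa using h
  have hT2 : T * Tᴴ = 1 := by
    ext x y
    have h : (∑ j, outer (θ j)) x y = (1 : Matrix X X ℂ) x y := by rw [hθc]
    simp only [Matrix.sum_apply, outer, Matrix.vecMulVec_apply, Pi.star_apply] at h
    simp only [Matrix.mul_apply, Matrix.conjTranspose_apply, hTdef, Matrix.of_apply]
    simpa using h
  have hW1 : Wᴴ * W = 1 := by
    ext j k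
    have h := hxb j k
    simp only [dotProduct, Pi.star_apply] at h
    simp only [Matrix.mul_apply, Matrix.conjTranspose_apply, hWdef, Matrix.of_apply, Matrix.one_apply]
    simpa using h
  have hW2 : W * Wᴴ = 1 := by
    ext x y
    have h : (∑ j, outer (xb j)) x y = (1 : Matrix X X ℂ) x y := by rw [hxbc]
    simp only [Matrix.sum_apply, outer, Matrix.vecMulVec_apply, Pi.star_apply] at h
    simp only [Matrix.mul_apply, Matrix.conjTranspose_apply, hWdef, Matrix.of_apply]
    simpa using h
  have hTdiag : T * Matrix.diagonal (fun j => if j = l then (1:ℂ) else 0) * Tᴴ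
      = outer (θ l) := by
    ext x y
    rw [Matrix.mul_apply]
    simp only [Matrix.mul_diagonal, Matrix.conjTranspose_apply, Matrix.of_apply,
      mul_ite, mul_one, mul_zero, ite_mul, zero_mul]
    simp [Finset.sum_ite_eq, outer, Matrix.vecMulVec_apply, hTdef, Matrix.of_apply, Pi.star_apply]
  have hWdiag : W * Matrix.diagonal (fun x => (p x : ℂ)) * Wᴴ = D := by
    ext x y
    rw [Matrix.mul_apply, hDdef]
    simp only [Matrix.mul_diagonal, Matrix.conjTranspose_apply, Matrix.of_apply,
      Matrix.sum_apply, Matrix.smul_apply, outer, Matrix.vecMulVec_apply, Pi.star_apply,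
      smul_eq_mul]
    refine Finset.sum_congr rfl fun j _ => by rw [hWdef]; simp only [Matrix.of_apply]; ring
  -- sigma is Hermitian
  have hPiH : ∀ b, (Pi' b)ᴴ = Pi' b := by
    intro b
    show ((1 : Matrix A A ℂ) ⊗ₖ Qb b)ᴴ = (1 : Matrix A A ℂ) ⊗ₖ Qb b
    rw [kron_conjTranspose, Matrix.conjTranspose_one, hQbH b]
  have hσH : σ.IsHermitian := by
    unfold Matrix.IsHermitian
    rw [hσdef, Matrix.conjTranspose_sum]
    refine Finset.sum_congr rfl fun b _ => ?_
    rw [Matrix.conjTranspose_mul, Matrix.conjTranspose_mul, hPiH, hρl.1.1,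
      Matrix.mul_assoc]
  -- spectral decomposition of sigma
  set U : Matrix (A × B) (A × B) ℂ := (hσH.eigenvectorUnitary : Matrix (A × B) (A × B) ℂ)
    with hUdef
  set sv : (A × B) → ℝ := hσH.eigenvalues with hsvdef
  have hU1 : Uᴴ * U = 1 := by
    rw [← Matrix.star_eq_conjTranspose]
    exact Matrix.mem_unitaryGroup_iff'.mp hσH.eigenvectorUnitary.2
  have hU2 : U * Uᴴ = 1 := by
    rw [← Matrix.star_eq_conjTranspose]
    exact Matrix.mem_unitaryGroup_iff.mp hσH.eigenvectorUnitary.2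
  have hσdec : σ = U * Matrix.diagonal (fun i => (sv i : ℂ)) * Uᴴ := by
    have h := hσH.spectral_theorem
    rw [Unitary.conjStarAlgAut_apply, Matrix.star_eq_conjTranspose] at h
    exact h
  -- kronecker decompositions
  set V1 : Matrix ((A × B) × X) ((A × B) × ι) ℂ := U ⊗ₖ T with hV1def
  set V2 : Matrix ((A × B) × X) ((A × B) × X) ℂ := U ⊗ₖ W with hV2def
  have hV11 : V1ᴴ * V1 = 1 := by
    rw [hV1def, kron_conjTranspose, ← Matrix.mul_kronecker_mul, hU1, hT1,
      Matrix.one_kronecker_one]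
  have hV12 : V1 * V1ᴴ = 1 := by
    rw [hV1def, kron_conjTranspose, ← Matrix.mul_kronecker_mul, hU2, hT2,
      Matrix.one_kronecker_one]
  have hV21 : V2ᴴ * V2 = 1 := by
    rw [hV2def, kron_conjTranspose, ← Matrix.mul_kronecker_mul, hU1, hW1,
      Matrix.one_kronecker_one]
  have hV22 : V2 * V2ᴴ = 1 := by
    rw [hV2def, kron_conjTranspose, ← Matrix.mul_kronecker_mul, hU2, hW2,
      Matrix.one_kronecker_one]
  set d1 : (A × B) × ι → ℝ := fun ij => sv ij.1 * (if ij.2 = l then 1 else 0) with hd1def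
  set d2 : (A × B) × X → ℝ := fun ix => sv ix.1 * p ix.2 with hd2def
  have hdec1 : σ ⊗ₖ outer (θ l) = V1 * Matrix.diagonal (fun ij => (d1 ij : ℂ)) * V1ᴴ := by
    conv_lhs => rw [hσdec, ← hTdiag]
    rw [Matrix.mul_kronecker_mul, Matrix.mul_kronecker_mul, ← kron_conjTranspose,
      Matrix.diagonal_kronecker_diagonal]
    rw [show (fun ij : (A × B) × ι => (sv ij.1 : ℂ) * (if ij.2 = l then (1:ℂ) else 0))
        = fun ij => (d1 ij : ℂ) from funext fun ij => by
      rcases eq_or_ne ij.2 l with h | h <;> simp [hd1def, h]]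
  have hdec2 : σ ⊗ₖ D = V2 * Matrix.diagonal (fun ix => (d2 ix : ℂ)) * V2ᴴ := by
    conv_lhs => rw [hσdec, ← hWdiag]
    rw [Matrix.mul_kronecker_mul, Matrix.mul_kronecker_mul, ← kron_conjTranspose,
      Matrix.diagonal_kronecker_diagonal]
    rw [show (fun ix : (A × B) × X => (sv ix.1 : ℂ) * (p ix.2 : ℂ))
        = fun ix => (d2 ix : ℂ) from funext fun ix => by
      simp [hd2def]]
  -- conjugated density matrix
  have hC1 : V1ᴴ * (ρl ⊗ₖ outer (θ l)) * V1
      = (Uᴴ * ρl * U) ⊗ₖ (Tᴴ * outer (θ l) * T) := by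
    rw [hV1def, kron_conjTranspose, ← Matrix.mul_kronecker_mul, ← Matrix.mul_kronecker_mul]
  have hC2 : V2ᴴ * (ρl ⊗ₖ outer (θ l)) * V2
      = (Uᴴ * ρl * U) ⊗ₖ (Wᴴ * outer (θ l) * W) := by
    rw [hV2def, kron_conjTranspose, ← Matrix.mul_kronecker_mul, ← Matrix.mul_kronecker_mul]
  -- diagonal entries
  have hTo : ∀ j : ι, (Tᴴ * outer (θ l) * T) j j
      = (star (θ j) ⬝ᵥ θ l) * (star (θ l) ⬝ᵥ θ j) := by
    intro j
    simp only [Matrix.mul_apply, Matrix.conjTranspose_apply, hTdef, Matrix.of_apply,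
      outer, Matrix.vecMulVec_apply, dotProduct, Pi.star_apply]
    rw [Finset.sum_mul_sum, Finset.sum_comm]
    refine Finset.sum_congr rfl fun x _ => ?_
    rw [Finset.sum_mul]
    refine Finset.sum_congr rfl fun y _ => by ring
  have hWo : ∀ x : X, (Wᴴ * outer (θ l) * W) x x
      = (star (xb x) ⬝ᵥ θ l) * (star (θ l) ⬝ᵥ xb x) := by
    intro x
    simp only [Matrix.mul_apply, Matrix.conjTranspose_apply, hWdef, Matrix.of_apply,
      outer, Matrix.vecMulVec_apply, dotProduct, Pi.star_apply]
    rw [Finset.sum_mul_sum, Finset.sum_comm]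
    refine Finset.sum_congr rfl fun a _ => ?_
    rw [Finset.sum_mul]
    refine Finset.sum_congr rfl fun y _ => by ring
  have ht : ∀ j : ι, (Tᴴ * outer (θ l) * T) j j = (if j = l then (1:ℂ) else 0) := by
    intro j
    rw [hTo j, hθ j l, hθ l j]
    rcases eq_or_ne j l with h | h
    · subst h; simp
    · simp [h, Ne.symm h]
  have hwp : ∀ x : X, (Wᴴ * outer (θ l) * W) x x = (p x : ℂ) := by
    intro x
    rw [hWo x, star_dotProduct_comm (θ l) (xb x)]
    have hx1 : star (xb x) ⬝ᵥ θ l = c x := rfl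
    rw [hx1]
    simpa using Complex.mul_conj (c x)
  -- positivity of diagonal entries of the conjugated density matrix
  have hrpos : ∀ i, 0 ≤ ((Uᴴ * ρl * U) i i).re := by
    intro i
    have key : (Uᴴ * ρl * U) i i = star (fun k => U k i) ⬝ᵥ (ρl *ᵥ (fun k => U k i)) := by
      simp only [Matrix.mul_apply, Matrix.conjTranspose_apply, dotProduct,
        Matrix.mulVec, Pi.star_apply, Finset.sum_mul, Finset.mul_sum]
      rw [Finset.sum_comm]
      refine Finset.sum_congr rfl fun y _ => Finset.sum_congr rfl fun x _ => by ring
    have h0 := hρl.1.dotProduct_mulVec_nonneg (fun k => U k i)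
    rw [key]
    have := (Complex.le_def.mp h0).1
    simpa using this
  -- sum of probabilities is one
  have htrc : ∑ x, (p x : ℂ) = 1 := by
    calc ∑ x, (p x : ℂ) = ∑ x, (Wᴴ * outer (θ l) * W) x x :=
          Finset.sum_congr rfl fun x _ => (hwp x).symm
      _ = (Wᴴ * (outer (θ l) * W)).trace := by
          rw [Matrix.trace]
          simp [Matrix.diag, Matrix.mul_assoc]
      _ = ((outer (θ l) * W) * Wᴴ).trace := Matrix.trace_mul_comm _ _
      _ = (outer (θ l)).trace := by rw [Matrix.mul_assoc, hW2, Matrix.mul_one]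
      _ = 1 := by
          have h := hθ l l
          rw [if_pos rfl] at h
          simp only [dotProduct, Pi.star_apply] at h
          rw [Matrix.trace]
          simp only [Matrix.diag, outer, Matrix.vecMulVec_apply, Pi.star_apply]
          rw [← h]
          exact Finset.sum_congr rfl fun x _ => by ring
  have hpsum : ∑ x, p x = 1 := by
    have := htrc
    rw [← Complex.ofReal_sum] at this
    exact_mod_cast this
  have hppos : ∀ x, 0 ≤ p x := fun x => Complex.normSq_nonneg _
  have hp1 : ∀ x, p x ≤ 1 := by
    intro x
    rw [← hpsum]
    exact Finset.single_le_sum (fun y _ => hppos y) (Finset.mem_univ x)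
  -- assemble
  rw [hsym, hpi]
  simp only [relEntropy]
  rw [hdec1, hdec2, matLog_decomp V1 hV11 hV12 d1, matLog_decomp V2 hV21 hV22 d2,
    trace_quad, trace_quad, hC1, hC2, Complex.sub_re, Complex.sub_re]
  apply sub_le_sub_left
  rw [Complex.re_sum, Complex.re_sum]
  have hterm2 : ∀ ix : (A × B) × X,
      ((Real.log (d2 ix) : ℂ) * (((Uᴴ * ρl * U) ⊗ₖ (Wᴴ * outer (θ l) * W)) ix ix)).re
      = (Real.log (sv ix.1 * p ix.2) * p ix.2) * ((Uᴴ * ρl * U) ix.1 ix.1).re := by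
    intro ix
    have hk : ((Uᴴ * ρl * U) ⊗ₖ (Wᴴ * outer (θ l) * W)) ix ix
        = (Uᴴ * ρl * U) ix.1 ix.1 * ((Wᴴ * outer (θ l) * W) ix.2 ix.2) := rfl
    rw [hk, hwp ix.2]
    have hc : (Real.log (d2 ix) : ℂ) * ((Uᴴ * ρl * U) ix.1 ix.1 * (p ix.2 : ℂ))
        = ((Real.log (sv ix.1 * p ix.2) * p ix.2 : ℝ) : ℂ) * ((Uᴴ * ρl * U) ix.1 ix.1) := by
      rw [show d2 ix = sv ix.1 * p ix.2 from rfl]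
      push_cast
      ring
    rw [hc, Complex.re_ofReal_mul]
  have hterm1 : ∀ ij : (A × B) × ι,
      ((Real.log (d1 ij) : ℂ) * (((Uᴴ * ρl * U) ⊗ₖ (Tᴴ * outer (θ l) * T)) ij ij)).re
      = if ij.2 = l then Real.log (sv ij.1) * ((Uᴴ * ρl * U) ij.1 ij.1).re else 0 := by
    intro ij
    have hk : ((Uᴴ * ρl * U) ⊗ₖ (Tᴴ * outer (θ l) * T)) ij ij
        = (Uᴴ * ρl * U) ij.1 ij.1 * ((Tᴴ * outer (θ l) * T) ij.2 ij.2) := rfl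
    rw [hk, ht ij.2]
    rcases eq_or_ne ij.2 l with h | h
    · rw [if_pos h, if_pos h, mul_one]
      have hd : d1 ij = sv ij.1 := by simp [hd1def, h]
      rw [hd, Complex.re_ofReal_mul]
    · rw [if_neg h, if_neg h, mul_zero, mul_zero, Complex.zero_re]
  rw [show (fun ix : (A × B) × X =>
        ((Real.log (d2 ix) : ℂ) * (((Uᴴ * ρl * U) ⊗ₖ (Wᴴ * outer (θ l) * W)) ix ix)).re)
      = fun ix => (Real.log (sv ix.1 * p ix.2) * p ix.2) * ((Uᴴ * ρl * U) ix.1 ix.1).re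
      from funext hterm2]
  rw [show (fun ij : (A × B) × ι =>
        ((Real.log (d1 ij) : ℂ) * (((Uᴴ * ρl * U) ⊗ₖ (Tᴴ * outer (θ l) * T)) ij ij)).re)
      = fun ij => if ij.2 = l then Real.log (sv ij.1) * ((Uᴴ * ρl * U) ij.1 ij.1).re else 0
      from funext hterm1]
  conv_lhs => rw [Fintype.sum_prod_type]
  conv_rhs => rw [Fintype.sum_prod_type]
  apply Finset.sum_le_sum
  intro i _
  have hRHS : ∑ j : ι, (if j = l then Real.log (sv i) * ((Uᴴ * ρl * U) i i).re else 0)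
      = Real.log (sv i) * ((Uᴴ * ρl * U) i i).re := by
    simp
  rw [hRHS]
  have hx : ∀ x : X, Real.log (sv i * p x) * p x ≤ Real.log (sv i) * p x := by
    intro x
    rcases eq_or_ne (p x) 0 with h0 | h0
    · rw [h0, mul_zero, mul_zero]
    rcases eq_or_ne (sv i) 0 with hs | hs
    · rw [hs, zero_mul, Real.log_zero, zero_mul]
    · rw [Real.log_mul hs h0, add_mul]
      have hlp : Real.log (p x) ≤ 0 := Real.log_nonpos (hppos x) (hp1 x)
      nlinarith [hppos x]
  calc ∑ x : X, Real.log (sv i * p x) * p x * ((Uᴴ * ρl * U) i i).re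
      = (∑ x : X, Real.log (sv i * p x) * p x) * ((Uᴴ * ρl * U) i i).re := by
        rw [Finset.sum_mul]
    _ ≤ (∑ x : X, Real.log (sv i) * p x) * ((Uᴴ * ρl * U) i i).re := by
        exact mul_le_mul_of_nonneg_right (Finset.sum_le_sum fun x _ => hx x) (hrpos i)
    _ = Real.log (sv i) * ((Uᴴ * ρl * U) i i).re := by
        rw [← Finset.mul_sum, hpsum, mul_one]
end
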